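/- (Theorem 1, upper bound) For every fixed k ≥ 1 and every ε > 0 there exists C > 0 such that limsup over primes q → ∞ of ℙ(Diam(q,k,g) > C·q^(1/k)) is at most ε; equivalently, lim_{C→∞} limsup_{q→∞, q prime} ℙ(Diam(q,k,g) > C·q^(1/k)) = 0. -/
import Mathlib

open scoped ENNReal

/-- `Diam q k g` is the least `N : ℕ` such that every `x : ZMod q` can be written as
`x = ∑ j, i j • g j` with `∑ j, i j ≤ N`, and `⊤` if no such `N` exists. -/
noncomputable def Diam (q k : ℕ) (g : Fin k → ZMod q) : ℕ∞ :=
  sInf ((↑) '' {N : ℕ | ∀ x : ZMod q, ∃ i : Fin k → ℕ,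
    (∑ j, i j) ≤ N ∧ x = ∑ j, (i j) • g j})

/-- Probability of the event `p` under the uniform measure on a finite type `α`. -/
noncomputable def Pr (α : Type*) (p : α → Prop) : ℝ :=
  (Nat.card {a // p a} : ℝ) / (Nat.card α : ℝ)

open Finset Filter
open scoped Classical

lemma fiber_card {G H : Type*} [AddCommGroup G] [Fintype G] [AddCommGroup H] [Fintype H]
    [DecidableEq H] (f : G →+ H) (hf : Function.Surjective f) (x : H) :
    (univ.filter (fun g => f g = x)).card * Fintype.card H = Fintype.card G := by
  have key : ∀ y : H, (univ.filter (fun g => f g = y)).card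
      = (univ.filter (fun g => f g = 0)).card := by
    intro y
    obtain ⟨g0, hg0⟩ := hf y
    apply Finset.card_bij' (fun g _ => g - g0) (fun g _ => g + g0)
    · intro a ha
      simp only [mem_filter, mem_univ, true_and] at ha ⊢
      simp [map_sub, ha, hg0]
    · intro a ha
      simp only [mem_filter, mem_univ, true_and] at ha ⊢
      simp [map_add, ha, hg0]
    · intro a _; simp
    · intro a _; simp
  have hpart : Fintype.card G = ∑ y : H, (univ.filter (fun g => f g = y)).card := by
    rw [← Finset.card_univ]
    exact Finset.card_eq_sum_card_fiberwise (fun g _ => mem_univ (f g))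
  rw [key x]
  rw [hpart]
  simp only [key]
  rw [Finset.sum_const, Finset.card_univ, smul_eq_mul, mul_comm]

section Forms
variable {q k : ℕ}

/-- the linear form `g ↦ ∑ j, c j * g j` as an additive hom. -/
def formHom' (c : Fin k → ZMod q) : (Fin k → ZMod q) →+ ZMod q where
  toFun g := ∑ j, c j * g j
  map_zero' := by simp
  map_add' g h := by simp [mul_add, Finset.sum_add_distrib]

lemma formHom'_apply (c g : Fin k → ZMod q) : formHom' c g = ∑ j, c j * g j := rfl

lemma formHom'_single (c : Fin k → ZMod q) (j : Fin k) :
    formHom' c (Pi.single j 1) = c j := by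
  rw [formHom'_apply]
  rw [Finset.sum_eq_single j]
  · simp
  · intro b _ hb; simp [Pi.single_eq_of_ne hb]
  · simp

lemma formHom'_smul (c : Fin k → ZMod q) (t : ZMod q) (g : Fin k → ZMod q) :
    formHom' c (t • g) = t * formHom' c g := by
  simp only [formHom'_apply, Finset.mul_sum, Pi.smul_apply, smul_eq_mul]
  exact Finset.sum_congr rfl fun j _ => by ring

lemma formHom'_surj [Fact q.Prime] {c : Fin k → ZMod q} (hc : c ≠ 0) :
    Function.Surjective (formHom' c) := by
  obtain ⟨j0, hj0⟩ := Function.ne_iff.mp hc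
  rw [Pi.zero_apply] at hj0
  intro y
  refine ⟨Pi.single j0 ((c j0)⁻¹ * y), ?_⟩
  have := formHom'_smul c ((c j0)⁻¹ * y) ((Pi.single j0 1 : Fin k → ZMod q))
  rw [formHom'_single] at this
  have h2 : Pi.single j0 ((c j0)⁻¹ * y) = ((c j0)⁻¹ * y) • (Pi.single j0 1 : Fin k → ZMod q) := by
    funext j
    by_cases h : j = j0
    · subst h; simp
    · simp [Pi.single_eq_of_ne h]
  rw [h2, this]
  field_simp

end Forms

section PairForms
variable {q k : ℕ}

def pairHom (c c' : Fin k → ZMod q) : (Fin k → ZMod q) →+ ZMod q × ZMod q where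
  toFun g := (∑ j, c j * g j, ∑ j, c' j * g j)
  map_zero' := by simp
  map_add' g h := by
    simp [mul_add, Finset.sum_add_distrib, Prod.ext_iff]




lemma pairHom_apply (c c' g : Fin k → ZMod q) :
    pairHom c c' g = (formHom' c g, formHom' c' g) := rfl

lemma pairHom_surj [Fact q.Prime] {c c' : Fin k → ZMod q} (hc : c ≠ 0)
    (hcc : ∀ lam : ZMod q, c' ≠ fun j => lam * c j) :
    Function.Surjective (pairHom c c') := by
  obtain ⟨g1, hg1⟩ := formHom'_surj hc (1 : ZMod q)
  set lam := formHom' c' g1 with hlam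
  have hex : ∃ h0, formHom' c h0 = 0 ∧ formHom' c' h0 ≠ 0 := by
    by_contra hcon
    push_neg at hcon
    apply hcc lam
    funext j
    have e1 : formHom' c (Pi.single j 1 - (c j) • g1) = 0 := by
      rw [map_sub, formHom'_single, formHom'_smul, hg1, mul_one, sub_self]
    have e2 := hcon _ e1
    rw [map_sub, formHom'_single, formHom'_smul, sub_eq_zero] at e2
    rw [e2, ← hlam, mul_comm]
  obtain ⟨h0, hh0, hmu⟩ := hex
  set mu := formHom' c' h0 with hmud
  rintro ⟨x, x'⟩
  refine ⟨x • g1 + ((x' - lam * x) * mu⁻¹) • h0, ?_⟩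
  rw [pairHom_apply, Prod.ext_iff]
  constructor
  · simp only [map_add, formHom'_smul, hg1, hh0, mul_one, mul_zero, add_zero]
  · simp only [map_add, formHom'_smul, ← hlam, ← hmud]
    field_simp
    ring
end PairForms

section Cards
variable {q k : ℕ}

lemma card_dom [NeZero q] : Fintype.card (Fin k → ZMod q) = q ^ k := by
  rw [Fintype.card_fun, ZMod.card, Fintype.card_fin]

lemma cardA [Fact q.Prime] {c : Fin k → ZMod q} (hc : c ≠ 0) (x : ZMod q) :
    (univ.filter fun g : Fin k → ZMod q => formHom' c g = x).card * q = q ^ k := by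
  have := fiber_card (formHom' c) (formHom'_surj hc) x
  rwa [ZMod.card, card_dom] at this

lemma cardB [Fact q.Prime] {c c' : Fin k → ZMod q} (hc : c ≠ 0)
    (hcc : ∀ lam : ZMod q, c' ≠ fun j => lam * c j) (x x' : ZMod q) :
    (univ.filter fun g : Fin k → ZMod q =>
      formHom' c g = x ∧ formHom' c' g = x').card * (q * q) = q ^ k := by
  have := fiber_card (pairHom c c') (pairHom_surj hc hcc) (x, x')
  rw [Fintype.card_prod, ZMod.card, card_dom] at this
  rw [← this]
  congr 2
  apply filter_congr
  intro g _
  constructor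
  · rintro ⟨h1, h2⟩; exact Prod.ext h1 h2
  · intro h; exact ⟨congrArg Prod.fst h, congrArg Prod.snd h⟩

lemma formHom'_scal (lam : ZMod q) (c g : Fin k → ZMod q) :
    formHom' (fun j => lam * c j) g = lam * formHom' c g := by
  show ∑ j, (lam * c j) * g j = lam * ∑ j, c j * g j
  rw [Finset.mul_sum]
  exact Finset.sum_congr rfl fun j _ => by ring

lemma cardC [Fact q.Prime] {c : Fin k → ZMod q} {lam : ZMod q} (hlam : lam ≠ 1)
    {x : ZMod q} (hx : x ≠ 0) :
    (univ.filter fun g : Fin k → ZMod q =>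
      formHom' c g = x ∧ formHom' (fun j => lam * c j) g = x) = ∅ := by
  apply filter_eq_empty_iff.mpr
  rintro g - ⟨h1, h2⟩
  rw [formHom'_scal, h1] at h2
  exact hlam ((mul_left_cancel₀ hx (by rw [mul_comm, h2, mul_one])))

def Bstar (k L : ℕ) : Finset (Fin k → ℕ) :=
  (Fintype.piFinset fun _ : Fin k => range (L+1)).erase 0

def red (q : ℕ) {k : ℕ} (i : Fin k → ℕ) : Fin k → ZMod q := fun j => (i j : ZMod q)

section Box
variable {q k L : ℕ}

lemma mem_Bstar {i : Fin k → ℕ} : i ∈ Bstar k L ↔ i ≠ 0 ∧ ∀ j, i j ≤ L := by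
  simp [Bstar, Fintype.mem_piFinset, Nat.lt_succ_iff]

lemma Bstar_card : (Bstar k L).card = (L+1)^k - 1 := by
  rw [Bstar, card_erase_of_mem (by simp [Fintype.mem_piFinset])]
  simp [Fintype.card_piFinset]

lemma red_ne_zero [NeZero q] (hLq : L + 1 ≤ q) {i : Fin k → ℕ} (hi : i ∈ Bstar k L) :
    red q i ≠ 0 := by
  obtain ⟨hne, hle⟩ := mem_Bstar.mp hi
  obtain ⟨j, hj⟩ := Function.ne_iff.mp hne
  rw [Pi.zero_apply] at hj
  intro h
  have : red q i j = 0 := by rw [h]; rfl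
  rw [red, ZMod.natCast_eq_zero_iff] at this
  have := Nat.le_of_dvd (Nat.pos_of_ne_zero hj) this
  have := hle j
  omega

lemma red_injOn [NeZero q] (hLq : L + 1 ≤ q) {i i' : Fin k → ℕ}
    (hi : i ∈ Bstar k L) (hi' : i' ∈ Bstar k L) (h : red q i = red q i') : i = i' := by
  obtain ⟨-, hle⟩ := mem_Bstar.mp hi
  obtain ⟨-, hle'⟩ := mem_Bstar.mp hi'
  funext j
  have hj : red q i j = red q i' j := congrFun h j
  rw [red, red] at hj
  have h1 : i j < q := by have := hle j; omega
  have h2 : i' j < q := by have := hle' j; omega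
  have := congrArg ZMod.val hj
  rwa [ZMod.val_natCast_of_lt h1, ZMod.val_natCast_of_lt h2] at this

end Box

def Rcount (q k L : ℕ) (x : ZMod q) (g : Fin k → ZMod q) : ℕ :=
  ((Bstar k L).filter fun i => formHom' (red q i) g = x).card


section Moments
variable {q k L : ℕ}

lemma T1 [Fact q.Prime] (hLq : L + 1 ≤ q) (x : ZMod q) :
    (∑ g : Fin k → ZMod q, Rcount q k L x g) * q = ((L+1)^k - 1) * q^k := by
  have swap : ∑ g : Fin k → ZMod q, Rcount q k L x g
      = ∑ i ∈ Bstar k L,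
          (univ.filter fun g : Fin k → ZMod q => formHom' (red q i) g = x).card := by
    simp only [Rcount, Finset.card_filter]
    rw [Finset.sum_comm]
  rw [swap, Finset.sum_mul]
  rw [Finset.sum_congr rfl (fun i hi => cardA (red_ne_zero hLq hi) x)]
  rw [Finset.sum_const, Bstar_card, smul_eq_mul]

lemma T2 [Fact q.Prime] (hLq : L + 1 ≤ q) {x : ZMod q} (hx : x ≠ 0) :
    (∑ g : Fin k → ZMod q, (Rcount q k L x g)^2) * (q*q)
      ≤ ((L+1)^k - 1) * q^(k+1) + ((L+1)^k - 1)^2 * q^k := by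
  set M1 := (L+1)^k - 1 with hM1
  set B := Bstar k L with hB
  have step2 : ∑ g : Fin k → ZMod q, (Rcount q k L x g)^2
      = ∑ i ∈ B, ∑ i' ∈ B, (univ.filter fun g : Fin k → ZMod q =>
          formHom' (red q i) g = x ∧ formHom' (red q i') g = x).card := by
    have step1 : ∀ g : Fin k → ZMod q, (Rcount q k L x g)^2
        = ∑ i ∈ B, ∑ i' ∈ B, (if formHom' (red q i) g = x ∧ formHom' (red q i') g = x
            then 1 else 0) := by
      intro g
      rw [Rcount, Finset.card_filter, sq, Finset.sum_mul_sum]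
      refine Finset.sum_congr rfl fun i _ => Finset.sum_congr rfl fun i' _ => ?_
      by_cases h1 : formHom' (red q i) g = x <;> by_cases h2 : formHom' (red q i') g = x <;>
        simp [h1, h2]
    simp only [step1, Finset.card_filter]
    rw [Finset.sum_comm]
    refine Finset.sum_congr rfl fun i _ => Finset.sum_comm
  rw [step2, Finset.sum_mul]
  have bound : ∀ i ∈ B, (∑ i' ∈ B, (univ.filter fun g : Fin k → ZMod q =>
        formHom' (red q i) g = x ∧ formHom' (red q i') g = x).card) * (q*q)
      ≤ q^(k+1) + M1 * q^k := by
    intro i hi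
    rw [← Finset.add_sum_erase _ _ hi, add_mul, Finset.sum_mul]
    have diag : (univ.filter fun g : Fin k → ZMod q =>
        formHom' (red q i) g = x ∧ formHom' (red q i) g = x).card * (q*q) = q^(k+1) := by
      have : (univ.filter fun g : Fin k → ZMod q =>
          formHom' (red q i) g = x ∧ formHom' (red q i) g = x)
          = (univ.filter fun g : Fin k → ZMod q => formHom' (red q i) g = x) := by
        apply filter_congr; intro g _; simp
      rw [this, ← mul_assoc, cardA (red_ne_zero hLq hi) x, pow_succ]
    have offdiag : ∀ i' ∈ B.erase i, (univ.filter fun g : Fin k → ZMod q =>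
        formHom' (red q i) g = x ∧ formHom' (red q i') g = x).card * (q*q) ≤ q^k := by
      intro i' hi'
      have hi'B : i' ∈ B := Finset.mem_of_mem_erase hi'
      have hne : i' ≠ i := Finset.ne_of_mem_erase hi'
      by_cases hdep : ∃ lam : ZMod q, red q i' = fun j => lam * red q i j
      · obtain ⟨lam, hlam⟩ := hdep
        have hlam1 : lam ≠ 1 := by
          intro h
          apply hne
          apply red_injOn hLq hi'B hi
          rw [hlam, h]; funext j; rw [one_mul]
        have : (univ.filter fun g : Fin k → ZMod q =>
            formHom' (red q i) g = x ∧ formHom' (red q i') g = x) = ∅ := by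
          rw [show red q i' = fun j => lam * red q i j from hlam]
          exact cardC hlam1 hx
        rw [this]
        simp
      · push_neg at hdep
        rw [cardB (red_ne_zero hLq hi) hdep x x]
    calc (univ.filter fun g : Fin k → ZMod q =>
            formHom' (red q i) g = x ∧ formHom' (red q i) g = x).card * (q*q)
          + ∑ i' ∈ B.erase i, (univ.filter fun g : Fin k → ZMod q =>
            formHom' (red q i) g = x ∧ formHom' (red q i') g = x).card * (q*q)
        ≤ q^(k+1) + ∑ i' ∈ B.erase i, q^k := by
          rw [diag]
          exact Nat.add_le_add_left (Finset.sum_le_sum offdiag) _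
      _ ≤ q^(k+1) + M1 * q^k := by
          rw [Finset.sum_const, smul_eq_mul]
          have : (B.erase i).card ≤ M1 := by
            rw [hM1, ← Bstar_card (k := k) (L := L), ← hB]
            exact (Finset.card_erase_le).trans le_rfl
          exact Nat.add_le_add_left (Nat.mul_le_mul_right _ this) _
  calc ∑ i ∈ B, (∑ i' ∈ B, (univ.filter fun g : Fin k → ZMod q =>
          formHom' (red q i) g = x ∧ formHom' (red q i') g = x).card) * (q*q)
      ≤ ∑ i ∈ B, (q^(k+1) + M1 * q^k) := Finset.sum_le_sum bound
    _ = M1 * q^(k+1) + M1^2 * q^k := by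
        rw [Finset.sum_const, smul_eq_mul, hB, Bstar_card, ← hM1]
        ring

end Moments

lemma Zbound {q k L : ℕ} [Fact q.Prime] (hk : 1 ≤ k) (hL : 1 ≤ L) (hLq : L + 1 ≤ q)
    {x : ZMod q} (hx : x ≠ 0) :
    ((univ.filter fun g : Fin k → ZMod q => Rcount q k L x g = 0).card : ℝ)
      * (((L+1)^k - 1 : ℕ) : ℝ) ≤ (q:ℝ)^(k+1) := by
  have hq2 : 2 ≤ q := (Fact.out : q.Prime).two_le
  set M1 : ℕ := (L+1)^k - 1 with hM1
  have hM1pos : 1 ≤ M1 := by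
    have : 2 ≤ (L+1)^k := by
      calc 2 = 2^1 := rfl
        _ ≤ 2^k := Nat.pow_le_pow_right (by norm_num) hk
        _ ≤ (L+1)^k := Nat.pow_le_pow_left (by omega) k
    omega
  set Z := univ.filter fun g : Fin k → ZMod q => Rcount q k L x g = 0 with hZ
  set P := univ.filter fun g : Fin k → ZMod q => ¬ (Rcount q k L x g = 0) with hP
  have hZP : Z.card + P.card = q^k := by
    rw [hZ, hP, Finset.card_filter_add_card_filter_not, Finset.card_univ, card_dom]
  -- sums
  set S1 : ℕ := ∑ g : Fin k → ZMod q, Rcount q k L x g with hS1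
  set S2 : ℕ := ∑ g : Fin k → ZMod q, (Rcount q k L x g)^2 with hS2
  have hsplit : ∑ g ∈ Z, Rcount q k L x g + ∑ g ∈ P, Rcount q k L x g = S1 :=
    Finset.sum_filter_add_sum_filter_not _ _ _
  have hZzero : ∑ g ∈ Z, Rcount q k L x g = 0 := by
    apply Finset.sum_eq_zero
    intro g hg
    exact (Finset.mem_filter.mp hg).2
  have hSP : ∑ g ∈ P, Rcount q k L x g = S1 := by omega
  have hP2 : ∑ g ∈ P, (Rcount q k L x g)^2 ≤ S2 :=
    Finset.sum_le_sum_of_subset (Finset.filter_subset _ _)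
  -- Cauchy-Schwarz
  have CS : (S1 : ℝ)^2 ≤ (P.card : ℝ) * (S2 : ℝ) := by
    have cs := sq_sum_le_card_mul_sum_sq (s := P)
      (f := fun g => (Rcount q k L x g : ℝ))
    have e1 : ∑ g ∈ P, (Rcount q k L x g : ℝ) = (S1 : ℝ) := by
      rw [← hSP]; push_cast; rfl
    have e2 : ∑ g ∈ P, (Rcount q k L x g : ℝ)^2 ≤ (S2 : ℝ) := by
      calc ∑ g ∈ P, (Rcount q k L x g : ℝ)^2
          = ((∑ g ∈ P, (Rcount q k L x g)^2 : ℕ) : ℝ) := by push_cast; rfl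
        _ ≤ (S2 : ℝ) := by exact_mod_cast hP2
    calc (S1:ℝ)^2 = (∑ g ∈ P, (Rcount q k L x g : ℝ))^2 := by rw [e1]
      _ ≤ (P.card : ℝ) * ∑ g ∈ P, (Rcount q k L x g : ℝ)^2 := cs
      _ ≤ (P.card : ℝ) * (S2 : ℝ) := by
          exact mul_le_mul_of_nonneg_left e2 (by positivity)
  -- cast T1, T2
  have e1 : (S1 : ℝ) * q = (M1 : ℝ) * (q:ℝ)^k := by exact_mod_cast T1 hLq x
  have e2 : (S2 : ℝ) * ((q:ℝ)*(q:ℝ)) ≤ (M1:ℝ) * (q:ℝ)^(k+1) + (M1:ℝ)^2 * (q:ℝ)^k := by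
    exact_mod_cast T2 hLq hx
  have hQ1 : (2:ℝ) ≤ (q:ℝ) := by exact_mod_cast hq2
  have hm1 : (1:ℝ) ≤ (M1:ℝ) := by exact_mod_cast hM1pos
  have hcard : (Z.card : ℝ) + (P.card : ℝ) = (q:ℝ)^k := by exact_mod_cast hZP
  set Q : ℝ := (q : ℝ) with hQ
  set m : ℝ := (M1 : ℝ) with hm
  have hXpos : (0:ℝ) < Q^k := by positivity
  have hPc : (0:ℝ) ≤ (P.card : ℝ) := by positivity
  have hZc : (0:ℝ) ≤ (Z.card : ℝ) := by positivity
  -- key : m * Q^k ≤ P.card * (Q + m)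
  have key : m * Q^k ≤ (P.card : ℝ) * (Q + m) := by
    have h1 : (m * Q^k) * (m * Q^k) ≤ ((P.card:ℝ) * (Q + m)) * (m * Q^k) := by
      have : (S1:ℝ)^2 * (Q*Q) ≤ ((P.card:ℝ) * (S2:ℝ)) * (Q*Q) :=
        mul_le_mul_of_nonneg_right CS (by positivity)
      calc (m * Q^k) * (m * Q^k) = ((S1:ℝ)*Q) * ((S1:ℝ)*Q) := by rw [e1]
        _ = (S1:ℝ)^2 * (Q*Q) := by ring
        _ ≤ ((P.card:ℝ) * (S2:ℝ)) * (Q*Q) := this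
        _ = (P.card:ℝ) * ((S2:ℝ) * (Q*Q)) := by ring
        _ ≤ (P.card:ℝ) * (m * Q^(k+1) + m^2 * Q^k) := by
            exact mul_le_mul_of_nonneg_left e2 hPc
        _ = ((P.card:ℝ) * (Q + m)) * (m * Q^k) := by rw [pow_succ]; ring
    have hpos : (0:ℝ) < m * Q^k := by positivity
    exact le_of_mul_le_mul_right h1 hpos
  -- conclude
  have final : (Z.card : ℝ) * m * (Q + m) ≤ Q^(k+1) * (Q + m) := by
    have hZeq : (Z.card : ℝ) = Q^k - (P.card : ℝ) := by linarith
    rw [hZeq, pow_succ]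
    nlinarith [key, hm1, hQ1, hXpos, hPc]
  have hQm : (0:ℝ) < Q + m := by linarith
  exact le_of_mul_le_mul_right final hQm

noncomputable def Sset (q k L : ℕ) [NeZero q] (g : Fin k → ZMod q) : Finset (ZMod q) :=
  univ.filter fun x => ∃ i : Fin k → ℕ, (∀ j, i j ≤ L) ∧ x = ∑ j, (i j) • g j

lemma cover {q k L : ℕ} [NeZero q] {g : Fin k → ZMod q}
    (hbig : q < 2 * (Sset q k L g).card) : Diam q k g ≤ ((2*(k*L) : ℕ) : ℕ∞) := by
  apply sInf_le
  refine ⟨2*(k*L), ?_, rfl⟩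
  intro x
  set S := Sset q k L g with hS
  have hub : ∀ y ∈ S, ∃ i : Fin k → ℕ, (∀ j, i j ≤ L) ∧ y = ∑ j, (i j) • g j := by
    intro y hy
    rw [hS, Sset, Finset.mem_filter] at hy
    exact hy.2
  -- S and x - S intersect
  set T := S.image (fun s => x - s) with hT
  have hTcard : T.card = S.card := Finset.card_image_of_injective _ (sub_right_injective)
  have hinter : (S ∩ T).Nonempty := by
    by_contra hcon
    rw [Finset.not_nonempty_iff_eq_empty] at hcon
    have hdisj : Disjoint S T := Finset.disjoint_iff_inter_eq_empty.mpr hcon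
    have := Finset.card_union_of_disjoint hdisj
    have hle : (S ∪ T).card ≤ q := by
      calc (S ∪ T).card ≤ Fintype.card (ZMod q) := Finset.card_le_univ _
        _ = q := ZMod.card q
    omega
  obtain ⟨y, hy⟩ := hinter
  have hyS : y ∈ S := (Finset.mem_inter.mp hy).1
  have hyT : y ∈ T := (Finset.mem_inter.mp hy).2
  obtain ⟨s, hsS, hsy⟩ := Finset.mem_image.mp hyT
  obtain ⟨i, hi, hiy⟩ := hub y hyS
  obtain ⟨i', hi', his⟩ := hub s hsS
  refine ⟨fun j => i j + i' j, ?_, ?_⟩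
  · have h1 : ∑ j, i j ≤ k * L := by
      calc ∑ j, i j ≤ (univ : Finset (Fin k)).card • L :=
        Finset.sum_le_card_nsmul _ _ _ (fun j _ => hi j)
      _ = k * L := by rw [Finset.card_fin, smul_eq_mul]
    have h2 : ∑ j, i' j ≤ k * L := by
      calc ∑ j, i' j ≤ (univ : Finset (Fin k)).card • L :=
        Finset.sum_le_card_nsmul _ _ _ (fun j _ => hi' j)
      _ = k * L := by rw [Finset.card_fin, smul_eq_mul]
    calc ∑ j, (i j + i' j) = ∑ j, i j + ∑ j, i' j := Finset.sum_add_distrib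
      _ ≤ 2*(k*L) := by omega
  · have hx : x = y + s := by linear_combination hsy
    rw [hx, hiy, his, ← Finset.sum_add_distrib]
    exact Finset.sum_congr rfl fun j _ => (add_nsmul _ _ _).symm

lemma notmem_Sset_Rcount {q k L : ℕ} [NeZero q] {g : Fin k → ZMod q} {x : ZMod q}
    (hx : x ∉ Sset q k L g) : Rcount q k L x g = 0 := by
  rw [Rcount, Finset.card_eq_zero, Finset.filter_eq_empty_iff]
  intro i hi hform
  apply hx
  rw [Sset, Finset.mem_filter]
  refine ⟨mem_univ _, i, (mem_Bstar.mp hi).2, ?_⟩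
  rw [← hform]
  show (∑ j, (red q i j) * g j) = ∑ j, (i j) • g j
  exact Finset.sum_congr rfl fun j _ => by rw [red, ← nsmul_eq_mul]

lemma badcount {q k L : ℕ} [Fact q.Prime] (hk : 1 ≤ k) (hL : 1 ≤ L) (hLq : L + 1 ≤ q)
    (hq4 : 4 ≤ q) :
    ((univ.filter fun g : Fin k → ZMod q => 2 * (Sset q k L g).card ≤ q).card : ℝ)
      * ((q : ℝ) * (((L+1)^k - 1 : ℕ) : ℝ)) ≤ 4 * (q:ℝ)^(k+2) := by
  haveI : NeZero q := ⟨by omega⟩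
  set Bad := univ.filter fun g : Fin k → ZMod q => 2 * (Sset q k L g).card ≤ q with hBad
  set NC : (Fin k → ZMod q) → ℕ :=
    fun g => (univ.filter fun x : ZMod q => ¬ (x = 0) ∧ x ∉ Sset q k L g).card with hNC
  -- pointwise: q ≤ 4 * NC g for g ∈ Bad
  have point : ∀ g ∈ Bad, q ≤ 4 * NC g := by
    intro g hg
    have hgS : 2 * (Sset q k L g).card ≤ q := (Finset.mem_filter.mp hg).2
    have hsplit : ((univ.filter fun x : ZMod q => ¬ (x = 0)).filter
          (fun x => x ∈ Sset q k L g)).card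
        + ((univ.filter fun x : ZMod q => ¬ (x = 0)).filter
          (fun x => x ∉ Sset q k L g)).card
        = (univ.filter fun x : ZMod q => ¬ (x = 0)).card :=
      Finset.card_filter_add_card_filter_not _
    have hcard_ne : (univ.filter fun x : ZMod q => ¬ (x = 0)).card = q - 1 := by
      rw [show (univ.filter fun x : ZMod q => ¬ (x = 0)) = univ.erase 0 by
        ext x; simp [Finset.mem_erase, and_comm]]
      rw [Finset.card_erase_of_mem (mem_univ _), Finset.card_univ, ZMod.card]
    have hA : ((univ.filter fun x : ZMod q => ¬ (x = 0)).filter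
        (fun x => x ∈ Sset q k L g)).card ≤ (Sset q k L g).card := by
      apply Finset.card_le_card
      intro x hx
      exact (Finset.mem_filter.mp hx).2
    have hNCeq : ((univ.filter fun x : ZMod q => ¬ (x = 0)).filter
        (fun x => x ∉ Sset q k L g)).card = NC g := by
      rw [hNC, Finset.filter_filter]
    omega
  -- sum over bad
  have hsum1 : Bad.card * q ≤ 4 * ∑ g : Fin k → ZMod q, NC g := by
    calc Bad.card * q = ∑ _g ∈ Bad, q := by rw [Finset.sum_const, smul_eq_mul]
      _ ≤ ∑ g ∈ Bad, 4 * NC g := Finset.sum_le_sum point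
      _ = 4 * ∑ g ∈ Bad, NC g := by rw [Finset.mul_sum]
      _ ≤ 4 * ∑ g : Fin k → ZMod q, NC g := by
          apply Nat.mul_le_mul_left
          exact Finset.sum_le_sum_of_subset (Finset.subset_univ _)
  -- double counting
  have hswap : ∑ g : Fin k → ZMod q, NC g
      = ∑ x ∈ univ.filter (fun x : ZMod q => ¬ (x = 0)),
          (univ.filter fun g : Fin k → ZMod q => x ∉ Sset q k L g).card := by
    simp only [hNC, Finset.card_filter]
    rw [Finset.sum_comm]
    rw [← Finset.sum_filter_add_sum_filter_not univ (fun x : ZMod q => ¬ (x = 0))]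
    have h2 : ∑ x ∈ univ.filter (fun x : ZMod q => ¬¬(x = 0)),
        ∑ g : Fin k → ZMod q, (if ¬ (x = 0) ∧ x ∉ Sset q k L g then 1 else 0) = 0 := by
      apply Finset.sum_eq_zero
      intro x hx
      apply Finset.sum_eq_zero
      intro g _
      have : x = 0 := not_not.mp (Finset.mem_filter.mp hx).2
      simp [this]
    rw [h2, add_zero]
    apply Finset.sum_congr rfl
    intro x hx
    have hx0 : ¬ (x = 0) := (Finset.mem_filter.mp hx).2
    apply Finset.sum_congr rfl
    intro g _
    by_cases h : x ∈ Sset q k L g <;> simp [h, hx0]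
  -- per x bound, cast to ℝ
  have perx : ∀ x ∈ univ.filter (fun x : ZMod q => ¬ (x = 0)),
      ((univ.filter fun g : Fin k → ZMod q => x ∉ Sset q k L g).card : ℝ)
        * (((L+1)^k - 1 : ℕ) : ℝ) ≤ (q:ℝ)^(k+1) := by
    intro x hx
    have hx0 : x ≠ 0 := (Finset.mem_filter.mp hx).2
    have hsub : (univ.filter fun g : Fin k → ZMod q => x ∉ Sset q k L g).card
        ≤ (univ.filter fun g : Fin k → ZMod q => Rcount q k L x g = 0).card := by
      apply Finset.card_le_card
      intro g hg
      rw [Finset.mem_filter] at hg ⊢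
      exact ⟨hg.1, notmem_Sset_Rcount hg.2⟩
    calc ((univ.filter fun g : Fin k → ZMod q => x ∉ Sset q k L g).card : ℝ)
          * (((L+1)^k - 1 : ℕ) : ℝ)
        ≤ ((univ.filter fun g : Fin k → ZMod q => Rcount q k L x g = 0).card : ℝ)
          * (((L+1)^k - 1 : ℕ) : ℝ) := by
          apply mul_le_mul_of_nonneg_right _ (by positivity)
          exact_mod_cast hsub
      _ ≤ (q:ℝ)^(k+1) := Zbound hk hL hLq hx0
  -- assemble
  have hcast : ((Bad.card : ℝ)) * (q:ℝ) ≤ 4 * ((∑ g : Fin k → ZMod q, NC g : ℕ) : ℝ) := by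
    exact_mod_cast hsum1
  have hfin : ((∑ g : Fin k → ZMod q, NC g : ℕ) : ℝ) * (((L+1)^k - 1 : ℕ) : ℝ)
      ≤ (q:ℝ) * (q:ℝ)^(k+1) := by
    rw [hswap]
    push_cast
    rw [Finset.sum_mul]
    calc ∑ x ∈ univ.filter (fun x : ZMod q => ¬ (x = 0)),
          ((univ.filter fun g : Fin k → ZMod q => x ∉ Sset q k L g).card : ℝ)
            * (((L+1)^k - 1 : ℕ) : ℝ)
        ≤ ∑ _x ∈ univ.filter (fun x : ZMod q => ¬ (x = 0)), (q:ℝ)^(k+1) :=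
          Finset.sum_le_sum perx
      _ = ((univ.filter (fun x : ZMod q => ¬ (x = 0))).card : ℝ) * (q:ℝ)^(k+1) := by
          rw [Finset.sum_const]; simp
      _ ≤ (q:ℝ) * (q:ℝ)^(k+1) := by
          apply mul_le_mul_of_nonneg_right _ (by positivity)
          have : (univ.filter (fun x : ZMod q => ¬ (x = 0))).card ≤ q := by
            calc (univ.filter (fun x : ZMod q => ¬ (x = 0))).card
                ≤ Fintype.card (ZMod q) := Finset.card_le_univ _
              _ = q := ZMod.card q
          exact_mod_cast this
  have hm : (0:ℝ) ≤ (((L+1)^k - 1 : ℕ) : ℝ) := by positivity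
  calc (Bad.card : ℝ) * ((q : ℝ) * (((L+1)^k - 1 : ℕ) : ℝ))
      = ((Bad.card : ℝ) * (q:ℝ)) * (((L+1)^k - 1 : ℕ) : ℝ) := by ring
    _ ≤ (4 * ((∑ g : Fin k → ZMod q, NC g : ℕ) : ℝ)) * (((L+1)^k - 1 : ℕ) : ℝ) :=
        mul_le_mul_of_nonneg_right hcast hm
    _ = 4 * (((∑ g : Fin k → ZMod q, NC g : ℕ) : ℝ) * (((L+1)^k - 1 : ℕ) : ℝ)) := by ring
    _ ≤ 4 * ((q:ℝ) * (q:ℝ)^(k+1)) := by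
        apply mul_le_mul_of_nonneg_left hfin (by norm_num)
    _ = 4 * (q:ℝ)^(k+2) := by ring

lemma Pr_eq {α : Type*} [Fintype α] (p : α → Prop) [DecidablePred p] :
    Pr α p = ((univ.filter p).card : ℝ) / (Fintype.card α : ℝ) := by
  rw [Pr, Nat.card_eq_fintype_card, Nat.card_eq_fintype_card, Fintype.card_subtype]

lemma Pr_nonneg {α : Type*} (p : α → Prop) : 0 ≤ Pr α p := by
  rw [Pr]; positivity

lemma Pr_mono {α : Type*} [Fintype α] {p p' : α → Prop} (h : ∀ a, p a → p' a) :
    Pr α p ≤ Pr α p' := by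
  rw [Pr_eq, Pr_eq]
  rcases Nat.eq_zero_or_pos (Fintype.card α) with h0 | hpos
  · rw [h0]; simp
  · have hcc : (univ.filter p).card ≤ (univ.filter p').card := by
      apply Finset.card_le_card
      intro a ha
      rw [Finset.mem_filter] at ha ⊢
      exact ⟨ha.1, h a ha.2⟩
    have hposR : (0:ℝ) < (Fintype.card α : ℝ) := by exact_mod_cast hpos
    gcongr

lemma mainq {q k L : ℕ} [Fact q.Prime] (hk : 1 ≤ k) (hL : 1 ≤ L) (hLq : L + 1 ≤ q)
    (hq4 : 4 ≤ q) :
    Pr (Fin k → ZMod q) (fun g => ¬ (Diam q k g ≤ ((2*(k*L) : ℕ) : ℕ∞)))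
      ≤ 4 * (q:ℝ) / (((L+1)^k - 1 : ℕ) : ℝ) := by
  haveI : NeZero q := ⟨by omega⟩
  have hqpos : (0:ℝ) < (q:ℝ) := by positivity
  have hM1pos : (0:ℝ) < (((L+1)^k - 1 : ℕ) : ℝ) := by
    have : 2 ≤ (L+1)^k := by
      calc 2 = 2^1 := rfl
        _ ≤ 2^k := Nat.pow_le_pow_right (by norm_num) hk
        _ ≤ (L+1)^k := Nat.pow_le_pow_left (by omega) k
    have : 1 ≤ (L+1)^k - 1 := by omega
    exact_mod_cast Nat.lt_of_lt_of_le Nat.zero_lt_one this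
  have hsub : (univ.filter fun g : Fin k → ZMod q => ¬ (Diam q k g ≤ ((2*(k*L) : ℕ) : ℕ∞))).card
      ≤ (univ.filter fun g : Fin k → ZMod q => 2 * (Sset q k L g).card ≤ q).card := by
    apply Finset.card_le_card
    intro g hg
    rw [Finset.mem_filter] at hg ⊢
    refine ⟨hg.1, ?_⟩
    by_contra hcon
    exact hg.2 (cover (by omega))
  set c := (univ.filter fun g : Fin k → ZMod q => ¬ (Diam q k g ≤ ((2*(k*L) : ℕ) : ℕ∞))).card
    with hc
  rw [Pr_eq, card_dom]
  rw [← hc]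
  rw [div_le_div_iff₀ (by positivity) hM1pos]
  have h1 : ((univ.filter fun g : Fin k → ZMod q =>
        ¬ (Diam q k g ≤ ((2*(k*L) : ℕ) : ℕ∞))).card : ℝ)
      * ((q : ℝ) * (((L+1)^k - 1 : ℕ) : ℝ)) ≤ 4 * (q:ℝ)^(k+2) := by
    calc ((univ.filter fun g : Fin k → ZMod q =>
          ¬ (Diam q k g ≤ ((2*(k*L) : ℕ) : ℕ∞))).card : ℝ)
        * ((q : ℝ) * (((L+1)^k - 1 : ℕ) : ℝ))
        ≤ ((univ.filter fun g : Fin k → ZMod q =>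
            2 * (Sset q k L g).card ≤ q).card : ℝ)
          * ((q : ℝ) * (((L+1)^k - 1 : ℕ) : ℝ)) := by
          apply mul_le_mul_of_nonneg_right _ (by positivity)
          exact_mod_cast hsub
      _ ≤ 4 * (q:ℝ)^(k+2) := badcount hk hL hLq hq4
  -- from h1 : c * (q * m) ≤ 4 q^{k+2}, deduce c * m ≤ 4q * q^k
  have h2 : ((c:ℝ) * (((L+1)^k - 1 : ℕ) : ℝ)) * (q:ℝ)
      ≤ (4 * (q:ℝ) * (q:ℝ)^k) * (q:ℝ) := by
    have he : (4:ℝ) * (q:ℝ)^(k+2) = (4 * (q:ℝ) * (q:ℝ)^k) * (q:ℝ) := by ring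
    nlinarith [h1]
  have := le_of_mul_le_mul_right h2 hqpos
  calc ((c:ℝ)) * (((L+1)^k - 1 : ℕ) : ℝ) ≤ 4 * (q:ℝ) * (q:ℝ)^k := this
    _ = 4 * (q:ℝ) * ((q^k : ℕ) : ℝ) := by push_cast; ring

set_option maxHeartbeats 1000000 in
theorem diam_upper_bound (k : ℕ) (hk : 1 ≤ k) (ε : ℝ) (hε : 0 < ε) :
    ∃ C : ℝ, 0 < C ∧
      Filter.limsup
        (fun q : ℕ => Pr (Fin k → ZMod q)
          (fun g => ENNReal.ofReal (C * (q : ℝ) ^ ((k : ℝ)⁻¹)) < (Diam q k g : ℝ≥0∞)))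
        (Filter.atTop ⊓ Filter.principal {q : ℕ | Nat.Prime q}) ≤ ε := by
  haveI hNB : (Filter.atTop ⊓ Filter.principal {q : ℕ | Nat.Prime q}).NeBot := by
    rw [← Filter.frequently_iff_neBot]
    rw [Filter.frequently_atTop]
    intro a
    obtain ⟨p, hpa, hp⟩ := Nat.exists_infinite_primes a
    exact ⟨p, hpa, hp⟩
  rcases eq_or_lt_of_le hk with hk1 | hk2
  · -- k = 1
    obtain rfl : k = 1 := hk1.symm
    refine ⟨3, by norm_num, ?_⟩
    apply Filter.limsup_le_of_le
      (Filter.isCoboundedUnder_le_of_le _ (fun q => Pr_nonneg _))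
    rw [Filter.eventually_inf_principal]
    filter_upwards [Filter.eventually_ge_atTop (max 1 (⌈ε⁻¹⌉₊ + 1))] with q hq hqp
    haveI : Fact q.Prime := ⟨hqp⟩
    haveI : NeZero q := ⟨hqp.ne_zero⟩
    have hq1 : 1 ≤ q := le_trans (le_max_left _ _) hq
    have hqε : ε⁻¹ < (q:ℝ) := by
      have h1 : ⌈ε⁻¹⌉₊ + 1 ≤ q := le_trans (le_max_right _ _) hq
      have h2 : ε⁻¹ ≤ (⌈ε⁻¹⌉₊ : ℝ) := Nat.le_ceil _
      have h3 : ((⌈ε⁻¹⌉₊ : ℕ) : ℝ) + 1 ≤ (q:ℝ) := by exact_mod_cast h1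
      linarith
    have step1 : Pr (Fin 1 → ZMod q)
        (fun g => ENNReal.ofReal (3 * (q : ℝ) ^ (((1:ℕ) : ℝ)⁻¹) : ℝ) < (Diam q 1 g : ℝ≥0∞))
        ≤ Pr (Fin 1 → ZMod q) (fun g => g = 0) := by
      apply Pr_mono
      intro g hg
      by_contra hgne
      have hg00 : g 0 ≠ 0 := by
        intro h
        exact hgne (funext fun j => by rw [Subsingleton.elim j 0, h]; rfl)
      have hDiam : Diam q 1 g ≤ (q : ℕ∞) := by
        apply sInf_le
        refine ⟨q, ?_, rfl⟩
        intro x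
        refine ⟨fun _ => (x * (g 0)⁻¹).val, ?_, ?_⟩
        · rw [Fin.sum_univ_one]
          exact le_of_lt (ZMod.val_lt _)
        · rw [Fin.sum_univ_one, nsmul_eq_mul]
          rw [ZMod.natCast_val, ZMod.cast_id]
          field_simp
      have hle : (Diam q 1 g : ℝ≥0∞) ≤ ENNReal.ofReal (3 * (q : ℝ) ^ (((1:ℕ) : ℝ)⁻¹)) := by
        have e1 : (Diam q 1 g : ℝ≥0∞) ≤ ((q:ℕ) : ℝ≥0∞) := by exact_mod_cast hDiam
        have e2 : ((q:ℕ) : ℝ≥0∞) = ENNReal.ofReal (q:ℝ) := (ENNReal.ofReal_natCast q).symm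
        have e3 : ENNReal.ofReal (q:ℝ) ≤ ENNReal.ofReal (3 * (q : ℝ) ^ (((1:ℕ) : ℝ)⁻¹)) := by
          apply ENNReal.ofReal_le_ofReal
          have : ((1:ℕ) : ℝ)⁻¹ = 1 := by norm_num
          rw [this, Real.rpow_one]
          have : (0:ℝ) ≤ q := by positivity
          linarith
        exact e1.trans (e2.le.trans e3)
      exact absurd hg (not_lt.mpr hle)
    have step2 : Pr (Fin 1 → ZMod q) (fun g => g = 0) = 1 / (q:ℝ) := by
      rw [Pr_eq, card_dom]
      congr 1
      · have : (univ.filter (fun g : Fin 1 → ZMod q => g = 0)) = {0} := by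
          ext g; simp
        rw [this, Finset.card_singleton, Nat.cast_one]
      · rw [pow_one]
    have step3 : (1:ℝ) / q ≤ ε := by
      rw [div_le_iff₀ (by positivity)]
      rw [inv_lt_iff_one_lt_mul₀ hε] at hqε
      linarith [hqε]
    calc Pr (Fin 1 → ZMod q)
          (fun g => ENNReal.ofReal (3 * (q : ℝ) ^ (((1:ℕ) : ℝ)⁻¹)) < (Diam q 1 g : ℝ≥0∞))
        ≤ Pr (Fin 1 → ZMod q) (fun g => g = 0) := step1
      _ = 1 / (q:ℝ) := step2
      _ ≤ ε := step3
  · -- k ≥ 2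
    have hk0 : (0:ℝ) < k := by exact_mod_cast lt_of_lt_of_le Nat.zero_lt_one hk
    have hkR : (1:ℝ) ≤ k := by exact_mod_cast hk
    have h16ε : (0:ℝ) < 16 / ε := by positivity
    set a : ℝ := (16/ε) ^ ((k:ℝ)⁻¹) with ha_def
    have ha : 0 < a := Real.rpow_pos_of_pos h16ε _
    set C : ℝ := 4 * k * (a + 1) with hC_def
    have hC : 0 < C := by positivity
    refine ⟨C, hC, ?_⟩
    apply Filter.limsup_le_of_le
      (Filter.isCoboundedUnder_le_of_le _ (fun q => Pr_nonneg _))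
    rw [Filter.eventually_inf_principal]
    filter_upwards [Filter.eventually_ge_atTop (max 4 (⌈(C+2)^2⌉₊))] with q hq hqp
    haveI : Fact q.Prime := ⟨hqp⟩
    haveI : NeZero q := ⟨hqp.ne_zero⟩
    have hq4 : 4 ≤ q := le_trans (le_max_left _ _) hq
    have hqpos : (0:ℝ) < q := by
      have : (0:ℕ) < q := by omega
      exact_mod_cast this
    have hq1 : (1:ℝ) ≤ q := by
      have : (1:ℕ) ≤ q := by omega
      exact_mod_cast this
    have hqC : ((C+2)^2 : ℝ) ≤ q := by
      have h1 : ⌈(C+2)^2⌉₊ ≤ q := le_trans (le_max_right _ _) hq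
      calc ((C+2)^2 : ℝ) ≤ (⌈(C+2)^2⌉₊ : ℝ) := Nat.le_ceil _
        _ ≤ (q:ℝ) := by exact_mod_cast h1
    set Q1 : ℝ := (q:ℝ) ^ ((k:ℝ)⁻¹) with hQ1_def
    have hQ1ge1 : 1 ≤ Q1 := Real.one_le_rpow hq1 (by positivity)
    have hQ1pos : 0 < Q1 := lt_of_lt_of_le one_pos hQ1ge1
    set z : ℝ := C * Q1 with hz_def
    set L : ℕ := ⌊z / (2*k)⌋₊ with hL_def
    have hzk : z / (2*k) = 2*(a+1)*Q1 := by
      rw [hz_def, hC_def]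
      field_simp
      ring
    have hfloor_le : (L:ℝ) ≤ z/(2*k) := Nat.floor_le (by rw [hzk]; positivity)
    have hfloor_gt : z/(2*k) - 1 < (L:ℝ) := Nat.sub_one_lt_floor _
    have hL1 : 1 ≤ L := by
      apply Nat.le_floor
      rw [hzk]
      have : (1:ℝ) * 1 ≤ (2*(a+1)) * Q1 := by
        apply mul_le_mul (by linarith) hQ1ge1 zero_le_one (by linarith)
      norm_num at this ⊢
      linarith
    have hLa : a * Q1 ≤ (L:ℝ) := by
      rw [hzk] at hfloor_gt
      nlinarith [ha.le, hQ1ge1]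
    -- L + 1 ≤ q
    have hLq : L + 1 ≤ q := by
      set s : ℝ := (q:ℝ) ^ ((2:ℝ)⁻¹) with hs_def
      have hs1 : 1 ≤ s := Real.one_le_rpow hq1 (by norm_num)
      have hs2 : s * s = q := by
        rw [hs_def, ← Real.rpow_add hqpos]
        norm_num
      have hsC : C + 2 ≤ s := by nlinarith [hs1]
      have hQ1s : Q1 ≤ s := by
        rw [hQ1_def, hs_def]
        apply Real.rpow_le_rpow_of_exponent_le hq1
        rw [inv_le_inv₀ hk0 (by norm_num)]
        exact_mod_cast hk2
      have hLreal : (L:ℝ) ≤ C * s := by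
        calc (L:ℝ) ≤ z/(2*k) := hfloor_le
          _ ≤ z := by
              apply div_le_self _ (by linarith [hkR])
              rw [hz_def]; positivity
          _ = C * Q1 := rfl
          _ ≤ C * s := by exact mul_le_mul_of_nonneg_left hQ1s hC.le
      have : (L:ℝ) + 1 ≤ (q:ℝ) := by nlinarith [hs1, hsC, hs2, hLreal]
      exact_mod_cast this
    -- (L+1)^k - 1 ≥ 16 q / ε
    have hm16 : 16*(q:ℝ)/ε ≤ (((L+1)^k - 1 : ℕ):ℝ) := by
      have hak : a^k = 16/ε := Real.rpow_inv_natCast_pow h16ε.le (by omega)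
      have hQk : Q1^k = q := Real.rpow_inv_natCast_pow hqpos.le (by omega)
      have h1 : (16/ε) * q ≤ (L:ℝ)^k := by
        calc (16/ε) * q = a^k * Q1^k := by rw [hak, hQk]
          _ = (a*Q1)^k := (mul_pow a Q1 k).symm
          _ ≤ (L:ℝ)^k := pow_le_pow_left₀ (by positivity) hLa k
      have h2 : (L:ℕ)^k + 1 ≤ (L+1)^k := Nat.pow_lt_pow_left (Nat.lt_succ_self L) (by omega)
      have h3 : ((L^k : ℕ) : ℝ) ≤ (((L+1)^k - 1 : ℕ):ℝ) := by
        have : (L:ℕ)^k ≤ (L+1)^k - 1 := by omega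
        exact_mod_cast this
      have h4 : ((L^k : ℕ) : ℝ) = (L:ℝ)^k := by push_cast; ring
      have h5 : 16*(q:ℝ)/ε = (16/ε) * q := by ring
      linarith [h1, h3, h4 ▸ h3]
    -- event inclusion
    have hNz : ((2*(k*L) : ℕ) : ℝ) ≤ z := by
      have := mul_le_mul_of_nonneg_left hfloor_le (by positivity : (0:ℝ) ≤ 2*k)
      rw [mul_div_cancel₀] at this
      · push_cast
        calc (2:ℝ)*(k*L) = 2*k*(L:ℝ) := by ring
          _ ≤ z := this
      · positivity
    have hmono : Pr (Fin k → ZMod q)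
        (fun g => ENNReal.ofReal (C * (q : ℝ) ^ ((k : ℝ)⁻¹)) < (Diam q k g : ℝ≥0∞))
        ≤ Pr (Fin k → ZMod q) (fun g => ¬ (Diam q k g ≤ ((2*(k*L) : ℕ) : ℕ∞))) := by
      apply Pr_mono
      intro g hg hD
      have hle : (Diam q k g : ℝ≥0∞) ≤ ENNReal.ofReal (C * (q : ℝ) ^ ((k : ℝ)⁻¹)) := by
        have e1 : (Diam q k g : ℝ≥0∞) ≤ (((2*(k*L) : ℕ)) : ℝ≥0∞) := by exact_mod_cast hD
        have e2 : (((2*(k*L) : ℕ)) : ℝ≥0∞) = ENNReal.ofReal ((2*(k*L) : ℕ) : ℝ) :=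
          (ENNReal.ofReal_natCast _).symm
        have e3 : ENNReal.ofReal ((2*(k*L) : ℕ) : ℝ)
            ≤ ENNReal.ofReal (C * (q : ℝ) ^ ((k : ℝ)⁻¹)) :=
          ENNReal.ofReal_le_ofReal hNz
        exact e1.trans (e2.le.trans e3)
      exact absurd hg (not_lt.mpr hle)
    have hmainq := mainq (L := L) hk hL1 hLq hq4
    have hfinal : 4 * (q:ℝ) / (((L+1)^k - 1 : ℕ) : ℝ) ≤ ε := by
      have hb : (0:ℝ) < 16*(q:ℝ)/ε := by positivity
      have h1 : 4 * (q:ℝ) / (((L+1)^k - 1 : ℕ) : ℝ) ≤ 4 * (q:ℝ) / (16*(q:ℝ)/ε) :=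
        div_le_div_of_nonneg_left (by positivity) hb hm16
      have h2 : 4 * (q:ℝ) / (16*(q:ℝ)/ε) = ε/4 := by
        rw [div_div_eq_mul_div, div_eq_div_iff (by positivity) (by norm_num : (4:ℝ) ≠ 0)]
        ring
      linarith
    calc Pr (Fin k → ZMod q)
          (fun g => ENNReal.ofReal (C * (q : ℝ) ^ ((k : ℝ)⁻¹)) < (Diam q k g : ℝ≥0∞))
        ≤ Pr (Fin k → ZMod q) (fun g => ¬ (Diam q k g ≤ ((2*(k*L) : ℕ) : ℕ∞))) := hmono
      _ ≤ 4 * (q:ℝ) / (((L+1)^k - 1 : ℕ) : ℝ) := hmainq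
      _ ≤ ε := hfinal
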